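/- Let g : [0,S] × [0,T] → [0,∞) be a bounded measurable function satisfying g(s,t) ≤ C(1 + ∫₀^s g(s',t) ds' + ∫₀^t g(s,t') dt') for all (s,t) and some constant C ≥ 0. Then g(s,t) ≤ C·e^{2C(s+t)}·e^{C²st} is bounded; in particular, there is a constant C' depending only on C, S, T such that g(s,t) ≤ C' for all (s,t) ∈ [0,S]×[0,T]. -/

import Mathlib

open MeasureTheory

/-- Two-parameter Gronwall inequality: a bounded nonnegative measurable `g` with
`g(s,t) ≤ C(1 + ∫₀^s g(s',t) ds' + ∫₀^t g(s,t') dt')` satisfies the explicit bound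
`g(s,t) ≤ C e^{2C(s+t)} e^{C² s t}` on `[0,S] × [0,T]`. -/
theorem stmt9 (S T : ℝ) (hS : 0 ≤ S) (hT : 0 ≤ T) (g : ℝ → ℝ → ℝ)
    (hmeas : Measurable (Function.uncurry g))
    (hnonneg : ∀ s t, 0 ≤ g s t)
    (B : ℝ) (hbdd : ∀ s t, g s t ≤ B)
    (C : ℝ) (hC : 0 ≤ C)
    (hineq : ∀ s ∈ Set.Icc (0:ℝ) S, ∀ t ∈ Set.Icc (0:ℝ) T,
      g s t ≤ C * (1 + (∫ s' in (0:ℝ)..s, g s' t) + ∫ t' in (0:ℝ)..t, g s t')) :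
    ∀ s ∈ Set.Icc (0:ℝ) S, ∀ t ∈ Set.Icc (0:ℝ) T,
      g s t ≤ C * Real.exp (2 * C * (s + t)) * Real.exp (C ^ 2 * s * t) := by
  rcases eq_or_lt_of_le hC with hC0 | hCpos
  · -- trivial case C = 0
    intro s hs t ht
    have := hineq s hs t ht
    rw [← hC0] at this ⊢
    simpa using this
  -- main case C > 0
  intro s hs t ht
  set A : ℝ → Set ℝ := fun r =>
    (fun p : ℝ × ℝ => g p.1 p.2) ''
      {p : ℝ × ℝ | p.1 ∈ Set.Icc 0 S ∧ p.2 ∈ Set.Icc 0 T ∧ p.1 + p.2 ≤ r} with hA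
  set h : ℝ → ℝ := fun r => sSup (A r) with hh
  have hBdd : ∀ r, BddAbove (A r) := by
    intro r
    refine ⟨B, ?_⟩
    rintro x ⟨⟨a, b⟩, -, rfl⟩
    exact hbdd a b
  have hmemle : ∀ a b r, a ∈ Set.Icc 0 S → b ∈ Set.Icc 0 T → a + b ≤ r →
      g a b ≤ h r := by
    intro a b r ha hb hab
    exact le_csSup (hBdd r) ⟨(a, b), ⟨ha, hb, hab⟩, rfl⟩
  have hne : ∀ r, 0 ≤ r → (A r).Nonempty := by
    intro r hr
    exact ⟨g 0 0, (0, 0), ⟨⟨le_rfl, hS⟩, ⟨le_rfl, hT⟩, by simpa using hr⟩, rfl⟩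
  have hhB : ∀ r, h r ≤ B := by
    intro r
    rcases Set.eq_empty_or_nonempty (A r) with he | hne'
    · have hB0 : 0 ≤ B := (hnonneg 0 0).trans (hbdd 0 0)
      simp [hh, he, Real.sSup_empty, hB0]
    · refine csSup_le hne' ?_
      rintro x ⟨⟨a, b⟩, -, rfl⟩
      exact hbdd a b
  have hh0 : ∀ r, 0 ≤ r → 0 ≤ h r := by
    intro r hr
    exact (hnonneg 0 0).trans (hmemle 0 0 r ⟨le_rfl, hS⟩ ⟨le_rfl, hT⟩ (by simpa using hr))
  have hmono : ∀ r1 r2, 0 ≤ r1 → r1 ≤ r2 → h r1 ≤ h r2 := by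
    intro r1 r2 hr1 hr12
    refine csSup_le_csSup (hBdd r2) (hne r1 hr1) ?_
    rintro x ⟨p, ⟨h1, h2, h3⟩, rfl⟩
    exact ⟨p, ⟨h1, h2, h3.trans hr12⟩, rfl⟩
  have hInt : ∀ r, 0 ≤ r → IntervalIntegrable h volume 0 r := by
    intro r hr
    apply MonotoneOn.intervalIntegrable
    rw [Set.uIcc_of_le hr]
    intro x hx y hy hxy
    exact hmono x y hx.1 hxy
  -- measurability / integrability of slices
  have hg_meas1 : ∀ t : ℝ, Measurable fun s => g s t := fun t =>
    hmeas.comp (measurable_id.prodMk measurable_const)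
  have hg_meas2 : ∀ s : ℝ, Measurable fun t => g s t := fun s =>
    hmeas.comp (measurable_const.prodMk measurable_id)
  have hg_int : ∀ (f : ℝ → ℝ), Measurable f → (∀ x, 0 ≤ f x) → (∀ x, f x ≤ B) →
      ∀ a b : ℝ, IntervalIntegrable f volume a b := by
    intro f hf h0 hB a b
    have hbound : ∀ x, ‖f x‖ ≤ B := fun x => by
      rw [Real.norm_of_nonneg (h0 x)]; exact hB x
    constructor <;>
      exact (integrableOn_const (C := B) measure_Ioc_lt_top.ne).mono'
        hf.aestronglyMeasurable.restrict (ae_of_all _ hbound)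
  -- key Gronwall-type inequality for h
  have hkey : ∀ r, 0 ≤ r → h r ≤ C * (1 + 2 * ∫ u in (0:ℝ)..r, h u) := by
    intro r hr
    refine csSup_le (hne r hr) ?_
    rintro x ⟨⟨a, b⟩, ⟨haS, hbT, habr⟩, rfl⟩
    have h1 : g a b ≤ C * (1 + (∫ s' in (0:ℝ)..a, g s' b) + ∫ t' in (0:ℝ)..b, g a t') :=
      hineq a haS b hbT
    have hIr : IntervalIntegrable h volume 0 r := hInt r hr
    have hhpos : 0 ≤ᵐ[volume.restrict (Set.Ioc (0:ℝ) r)] h :=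
      ae_restrict_of_forall_mem measurableSet_Ioc fun x hx => hh0 x hx.1.le
    have ia : (∫ s' in (0:ℝ)..a, g s' b) ≤ ∫ u in (0:ℝ)..r, h u := by
      have hint1 : IntervalIntegrable (fun s' => g s' b) volume 0 a :=
        hg_int _ (hg_meas1 b) (fun x => hnonneg x b) (fun x => hbdd x b) 0 a
      have hint2 : IntervalIntegrable (fun s' => h (s' + b)) volume 0 a := by
        apply MonotoneOn.intervalIntegrable
        rw [Set.uIcc_of_le haS.1]
        intro x hx y hy hxy
        exact hmono (x + b) (y + b) (add_nonneg hx.1 hbT.1) (by linarith)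
      calc (∫ s' in (0:ℝ)..a, g s' b) ≤ ∫ s' in (0:ℝ)..a, h (s' + b) := by
            refine intervalIntegral.integral_mono_on haS.1 hint1 hint2 ?_
            intro x hx
            exact hmemle x b (x + b) ⟨hx.1, hx.2.trans haS.2⟩ hbT le_rfl
        _ = ∫ u in (0+b)..(a+b), h u := intervalIntegral.integral_comp_add_right h b
        _ ≤ ∫ u in (0:ℝ)..r, h u := by
            refine intervalIntegral.integral_mono_interval ?_ ?_ ?_ hhpos hIr
            · linarith [hbT.1]
            · linarith [haS.1]
            · exact habr
    have ib : (∫ t' in (0:ℝ)..b, g a t') ≤ ∫ u in (0:ℝ)..r, h u := by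
      have hint1 : IntervalIntegrable (fun t' => g a t') volume 0 b :=
        hg_int _ (hg_meas2 a) (fun x => hnonneg a x) (fun x => hbdd a x) 0 b
      have hint2 : IntervalIntegrable (fun t' => h (t' + a)) volume 0 b := by
        apply MonotoneOn.intervalIntegrable
        rw [Set.uIcc_of_le hbT.1]
        intro x hx y hy hxy
        exact hmono (x + a) (y + a) (add_nonneg hx.1 haS.1) (by linarith)
      calc (∫ t' in (0:ℝ)..b, g a t') ≤ ∫ t' in (0:ℝ)..b, h (t' + a) := by
            refine intervalIntegral.integral_mono_on hbT.1 hint1 hint2 ?_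
            intro x hx
            exact hmemle a x (x + a) haS ⟨hx.1, hx.2.trans hbT.2⟩ (by linarith)
        _ = ∫ u in (0+a)..(b+a), h u := intervalIntegral.integral_comp_add_right h a
        _ ≤ ∫ u in (0:ℝ)..r, h u := by
            refine intervalIntegral.integral_mono_interval ?_ ?_ ?_ hhpos hIr
            · linarith [haS.1]
            · linarith [hbT.1]
            · linarith
    calc g a b ≤ C * (1 + (∫ s' in (0:ℝ)..a, g s' b) + ∫ t' in (0:ℝ)..b, g a t') := h1
      _ ≤ C * (1 + 2 * ∫ u in (0:ℝ)..r, h u) := by nlinarith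
  -- iteration
  have hiter : ∀ n : ℕ, ∀ r, 0 ≤ r →
      h r ≤ C * Real.exp (2 * C * r) + B * (2 * C) ^ n * r ^ n / n.factorial := by
    intro n
    induction n with
    | zero =>
        intro r hr
        have := hhB r
        have hexp : 0 ≤ C * Real.exp (2 * C * r) := by positivity
        simp only [pow_zero, Nat.factorial_zero, Nat.cast_one, mul_one]
        linarith
    | succ n ih =>
        intro r hr
        have step : h r ≤ C * (1 + 2 * ∫ u in (0:ℝ)..r, h u) := hkey r hr
        have hintP : IntervalIntegrable
            (fun u => C * Real.exp (2 * C * u) + B * (2 * C) ^ n * u ^ n / n.factorial)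
            volume 0 r := by
          apply Continuous.intervalIntegrable
          fun_prop
        have hmonoInt : (∫ u in (0:ℝ)..r, h u) ≤
            ∫ u in (0:ℝ)..r,
              (C * Real.exp (2 * C * u) + B * (2 * C) ^ n * u ^ n / n.factorial) := by
          refine intervalIntegral.integral_mono_on hr (hInt r hr) hintP ?_
          intro x hx
          exact ih x hx.1
        have hcomp : (∫ u in (0:ℝ)..r,
            (C * Real.exp (2 * C * u) + B * (2 * C) ^ n * u ^ n / n.factorial)) =
            C * ((2 * C)⁻¹ * (Real.exp (2 * C * r) - 1))
              + (B * (2 * C) ^ n / n.factorial) * (r ^ (n + 1) / (n + 1)) := by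
          have hi1 : IntervalIntegrable (fun u => C * Real.exp (2 * C * u)) volume 0 r := by
            apply Continuous.intervalIntegrable; fun_prop
          have hi2 : IntervalIntegrable (fun u => B * (2 * C) ^ n * u ^ n / n.factorial)
              volume 0 r := by
            apply Continuous.intervalIntegrable; fun_prop
          rw [intervalIntegral.integral_add hi1 hi2]
          congr 1
          · rw [intervalIntegral.integral_const_mul]
            congr 1
            have h2C : (2 * C) ≠ 0 := by positivity
            rw [intervalIntegral.integral_comp_mul_left (fun x => Real.exp x) h2C]
            simp [Real.exp_zero]
          · have : (fun u : ℝ => B * (2 * C) ^ n * u ^ n / n.factorial) =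
                fun u : ℝ => (B * (2 * C) ^ n / n.factorial) * u ^ n := by
              funext u; ring
            rw [this, intervalIntegral.integral_const_mul, integral_pow]
            ring
        have hfact : ((n + 1).factorial : ℝ) = (n + 1) * n.factorial := by
          rw [Nat.factorial_succ]; push_cast; ring
        have hnfac : (0:ℝ) < n.factorial := by positivity
        rw [hcomp] at hmonoInt
        calc h r ≤ C * (1 + 2 * ∫ u in (0:ℝ)..r, h u) := step
          _ ≤ C * (1 + 2 * (C * ((2 * C)⁻¹ * (Real.exp (2 * C * r) - 1))
              + (B * (2 * C) ^ n / n.factorial) * (r ^ (n + 1) / (n + 1)))) := by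
              have := mul_le_mul_of_nonneg_left hmonoInt (by norm_num : (0:ℝ) ≤ 2)
              nlinarith
          _ = C * Real.exp (2 * C * r) + B * (2 * C) ^ (n+1) * r ^ (n+1) / (n+1).factorial := by
              rw [hfact]
              have h2C : (2 * C) ≠ 0 := by positivity
              have hn1 : ((n:ℝ) + 1) ≠ 0 := by positivity
              field_simp
              ring
  -- take the limit n → ∞
  have hlim : ∀ r, 0 ≤ r → h r ≤ C * Real.exp (2 * C * r) := by
    intro r hr
    have htend : Filter.Tendsto
        (fun n : ℕ => C * Real.exp (2 * C * r) + B * (2 * C) ^ n * r ^ n / n.factorial)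
        Filter.atTop (nhds (C * Real.exp (2 * C * r))) := by
      have h1 : (fun n : ℕ => C * Real.exp (2 * C * r) + B * (2 * C) ^ n * r ^ n / n.factorial) =
          fun n : ℕ => C * Real.exp (2 * C * r) + B * ((2 * C * r) ^ n / n.factorial) := by
        funext n; rw [mul_pow]; ring
      have h2 : Filter.Tendsto (fun n : ℕ => (2 * C * r) ^ n / (n.factorial : ℝ))
          Filter.atTop (nhds 0) := FloorSemiring.tendsto_pow_div_factorial_atTop (2 * C * r)
      have h3 := (tendsto_const_nhds (x := C * Real.exp (2 * C * r))
          (f := Filter.atTop (α := ℕ))).add ((h2.const_mul B))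
      rw [h1]
      simpa using h3
    exact ge_of_tendsto' htend fun n => hiter n r hr
  -- conclude
  have hfin : g s t ≤ C * Real.exp (2 * C * (s + t)) := by
    refine (hmemle s t (s + t) hs ht le_rfl).trans (hlim (s + t) ?_)
    exact add_nonneg hs.1 ht.1
  refine hfin.trans ?_
  have h1 : (1:ℝ) ≤ Real.exp (C ^ 2 * s * t) := by
    apply Real.one_le_exp
    have := hs.1; have := ht.1
    positivity
  have h2 : 0 ≤ C * Real.exp (2 * C * (s + t)) := by positivity
  nlinarith
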